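/- The function r is differentiable at 0, r(0) = B·e^b + e^{−b} > 0, and r'(0)/r(0) = E, where E = ((log q)²/(2b²)) · ((B−1)·b·cosh b + ((B+1)·b − (B−1))·sinh b) / ((B+1)·cosh b + (B−1)·sinh b) if b ≠ 0, and E = (log q)²/2 if b = 0. -/

import Mathlib

/-- `s(λ) = b² + (log q)²·λ`. -/
noncomputable def sFun (q b : ℝ) (lam : ℝ) : ℝ := b ^ 2 + (Real.log q) ^ 2 * lam

/-- `r(λ) = (B+1)·∑ s(λ)ⁿ/(2n)! + (B−1)·b·∑ s(λ)ⁿ/(2n+1)!`. -/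
noncomputable def rFun (q b B : ℝ) (lam : ℝ) : ℝ :=
  (B + 1) * ∑' n : ℕ, sFun q b lam ^ n / ((2 * n).factorial : ℝ) +
    (B - 1) * b * ∑' n : ℕ, sFun q b lam ^ n / ((2 * n + 1).factorial : ℝ)

namespace RFunAux

open Real

/-- Summability of the auxiliary bound series `n * R^(n-1) / n!`. -/
lemma summable_u (R : ℝ) : Summable (fun n : ℕ => (n : ℝ) * R ^ (n - 1) / n.factorial) := by
  rw [← summable_nat_add_iff 1]
  have h : (fun n : ℕ => ((n + 1 : ℕ) : ℝ) * R ^ (n + 1 - 1) / ((n + 1).factorial : ℝ))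
      = fun n : ℕ => R ^ n / (n.factorial : ℝ) := by
    funext n
    have hfac : (((n + 1).factorial : ℕ) : ℝ) = (n + 1) * (n.factorial : ℝ) := by
      rw [Nat.factorial_succ]; push_cast; ring
    have hn : ((n : ℝ) + 1) ≠ 0 := by positivity
    have hf : ((n.factorial : ℕ) : ℝ) ≠ 0 := by
      exact_mod_cast n.factorial_pos.ne'
    rw [Nat.add_sub_cancel, hfac]
    push_cast
    field_simp
  rw [h]
  exact Real.summable_pow_div_factorial R

lemma mySummable (a : ℕ → ℝ) (ha : ∀ n, |a n| ≤ 1 / n.factorial) (s : ℝ) :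
    Summable (fun n : ℕ => a n * s ^ n) := by
  apply Summable.of_abs
  refine Summable.of_nonneg_of_le (fun n => abs_nonneg _) (fun n => ?_)
    (Real.summable_pow_div_factorial |s|)
  rw [abs_mul, abs_pow]
  calc |a n| * |s| ^ n ≤ (1 / n.factorial) * |s| ^ n := by
        gcongr; exact ha n
    _ = |s| ^ n / n.factorial := by ring

lemma mySummableDeriv (a : ℕ → ℝ) (ha : ∀ n, |a n| ≤ 1 / n.factorial) (x : ℝ) :
    Summable (fun n : ℕ => a n * ((n : ℝ) * x ^ (n - 1))) := by
  apply Summable.of_abs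
  refine Summable.of_nonneg_of_le (fun n => abs_nonneg _) (fun n => ?_) (summable_u |x|)
  rw [abs_mul, abs_mul, abs_pow, Nat.abs_cast]
  calc |a n| * ((n : ℝ) * |x| ^ (n - 1)) ≤ (1 / n.factorial) * ((n : ℝ) * |x| ^ (n - 1)) := by
        gcongr; exact ha n
    _ = (n : ℝ) * |x| ^ (n - 1) / n.factorial := by ring

/-- Termwise differentiation of the series `∑ aₙ sⁿ`. -/
lemma hasDerivAt_mySeries (a : ℕ → ℝ) (ha : ∀ n, |a n| ≤ 1 / n.factorial) (x : ℝ) :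
    HasDerivAt (fun s : ℝ => ∑' n : ℕ, a n * s ^ n)
      (∑' n : ℕ, a n * ((n : ℝ) * x ^ (n - 1))) x := by
  set R : ℝ := |x| + 1 with hRdef
  have hxR : |x| < R := by simp [hRdef]
  have hR0 : (0 : ℝ) ≤ R := by positivity
  refine hasDerivAt_tsum_of_isPreconnected
    (u := fun n : ℕ => (1 / n.factorial : ℝ) * ((n : ℝ) * R ^ (n - 1)))
    ?_ (Metric.isOpen_ball (x := (0 : ℝ)) (ε := R))
    ((convex_ball (0 : ℝ) R).isPreconnected)
    (fun n y _ => (hasDerivAt_pow n y).const_mul (a n))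
    (fun n y hy => ?_) ?_ (mySummable a ha x) ?_
  · have := summable_u R
    apply this.congr
    intro n; ring
  · rw [Real.norm_eq_abs, abs_mul, abs_mul, abs_pow, Nat.abs_cast]
    have hyR : |y| ≤ R := by
      rw [Metric.mem_ball, dist_zero_right, Real.norm_eq_abs] at hy
      exact hy.le
    have h2 : |y| ^ (n - 1) ≤ R ^ (n - 1) := pow_le_pow_left₀ (abs_nonneg y) hyR _
    exact mul_le_mul (ha n) (mul_le_mul_of_nonneg_left h2 (Nat.cast_nonneg n))
      (by positivity) (by positivity)
  · rw [Metric.mem_ball, dist_zero_right, Real.norm_eq_abs]; exact hxR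
  · rw [Metric.mem_ball, dist_zero_right, Real.norm_eq_abs]; exact hxR

/-- Coefficients `1/(2n)!`. -/
noncomputable def a1 (n : ℕ) : ℝ := 1 / ((2 * n).factorial : ℝ)
/-- Coefficients `1/(2n+1)!`. -/
noncomputable def a2 (n : ℕ) : ℝ := 1 / ((2 * n + 1).factorial : ℝ)

lemma ha1 : ∀ n, |a1 n| ≤ 1 / n.factorial := by
  intro n
  have h1 : (0:ℝ) < ((2 * n).factorial : ℝ) := by exact_mod_cast (2 * n).factorial_pos
  rw [a1, abs_of_pos (by positivity)]
  apply one_div_le_one_div_of_le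
  · exact_mod_cast n.factorial_pos
  · exact_mod_cast Nat.factorial_le (by omega)

lemma ha2 : ∀ n, |a2 n| ≤ 1 / n.factorial := by
  intro n
  have h1 : (0:ℝ) < ((2 * n + 1).factorial : ℝ) := by exact_mod_cast (2 * n + 1).factorial_pos
  rw [a2, abs_of_pos (by positivity)]
  apply one_div_le_one_div_of_le
  · exact_mod_cast n.factorial_pos
  · exact_mod_cast Nat.factorial_le (by omega)

/-- reindexing identity: the derivative series of `∑ sⁿ/(2n)!` is half of `∑ sⁿ/(2n+1)!`. -/
lemma E1_eq (x : ℝ) :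
    ∑' n : ℕ, a1 n * ((n : ℝ) * x ^ (n - 1)) = (1 / 2) * ∑' n : ℕ, a2 n * x ^ n := by
  rw [Summable.tsum_eq_zero_add (mySummableDeriv a1 ha1 x)]
  simp only [Nat.cast_zero, zero_mul, mul_zero, zero_add]
  rw [← tsum_mul_left]
  congr 1; funext n
  have hfac : ((2 * (n + 1)).factorial : ℝ) = (2 * n + 2) * ((2 * n + 1).factorial : ℝ) := by
    have h : 2 * (n + 1) = (2 * n + 1) + 1 := by ring
    rw [h, Nat.factorial_succ]; push_cast; ring
  have hf1 : ((2 * n + 1).factorial : ℝ) ≠ 0 := by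
    exact_mod_cast (2 * n + 1).factorial_pos.ne'
  rw [a1, a2, Nat.add_sub_cancel, hfac]
  have h2 : (2 * (n : ℝ) + 2) ≠ 0 := by positivity
  push_cast
  field_simp

/-- identity: `2x · (derivative series of ∑ sⁿ/(2n+1)!) = ∑ sⁿ/(2n)! − ∑ sⁿ/(2n+1)!`. -/
lemma E2_eq (x : ℝ) :
    2 * x * ∑' n : ℕ, a2 n * ((n : ℝ) * x ^ (n - 1)) =
      (∑' n : ℕ, a1 n * x ^ n) - ∑' n : ℕ, a2 n * x ^ n := by
  rw [← tsum_mul_left, ← Summable.tsum_sub (mySummable a1 ha1 x) (mySummable a2 ha2 x)]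
  congr 1; funext n
  cases n with
  | zero => simp [a1, a2]
  | succ m =>
    have hfac : ((2 * (m + 1) + 1).factorial : ℝ)
        = (2 * (m + 1) + 1) * ((2 * (m + 1)).factorial : ℝ) := by
      rw [Nat.factorial_succ]; push_cast; ring
    have hf1 : ((2 * (m + 1)).factorial : ℝ) ≠ 0 := by
      exact_mod_cast (2 * (m + 1)).factorial_pos.ne'
    have h2 : (2 * ((m : ℝ) + 1) + 1) ≠ 0 := by positivity
    rw [a1, a2, Nat.add_sub_cancel, hfac]
    push_cast
    field_simp
    ring

end RFunAux

open RFunAux Real in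
theorem rFun_differentiableAt_zero_and_log_deriv
    (q b B : ℝ) (hq : 1 < q) (hB : 0 < B) :
    DifferentiableAt ℝ (rFun q b B) 0 ∧
      rFun q b B 0 = B * Real.exp b + Real.exp (-b) ∧
      0 < rFun q b B 0 ∧
      (b ≠ 0 →
        deriv (rFun q b B) 0 / rFun q b B 0 =
          (Real.log q) ^ 2 / (2 * b ^ 2) *
            (((B - 1) * b * Real.cosh b + ((B + 1) * b - (B - 1)) * Real.sinh b) /
              ((B + 1) * Real.cosh b + (B - 1) * Real.sinh b))) ∧
      (b = 0 → deriv (rFun q b B) 0 / rFun q b B 0 = (Real.log q) ^ 2 / 2) := by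
  set L : ℝ := (Real.log q) ^ 2 with hL
  -- rewrite rFun in terms of the coefficient sequences
  have hre : rFun q b B = fun lam =>
      (B + 1) * ∑' n : ℕ, a1 n * (sFun q b lam) ^ n
        + (B - 1) * b * ∑' n : ℕ, a2 n * (sFun q b lam) ^ n := by
    funext lam
    simp only [rFun, a1, a2, one_div, inv_mul_eq_div]
  have s0 : sFun q b 0 = b ^ 2 := by simp [sFun]
  -- derivative of sFun at 0
  have hs : HasDerivAt (sFun q b) L 0 := by
    have h := ((hasDerivAt_id (0:ℝ)).const_mul L).const_add (b ^ 2)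
    have e : sFun q b = fun x => b ^ 2 + L * id x := by funext x; simp [sFun, hL]
    rw [e]; simpa using h
  -- derivative of rFun at 0
  set E1 : ℝ := ∑' n : ℕ, a1 n * ((n : ℝ) * (sFun q b 0) ^ (n - 1)) with hE1
  set E2 : ℝ := ∑' n : ℕ, a2 n * ((n : ℝ) * (sFun q b 0) ^ (n - 1)) with hE2
  have h1 : HasDerivAt (fun lam => ∑' n : ℕ, a1 n * (sFun q b lam) ^ n) (E1 * L) 0 :=
    (hasDerivAt_mySeries a1 ha1 (sFun q b 0)).comp 0 hs
  have h2 : HasDerivAt (fun lam => ∑' n : ℕ, a2 n * (sFun q b lam) ^ n) (E2 * L) 0 :=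
    (hasDerivAt_mySeries a2 ha2 (sFun q b 0)).comp 0 hs
  have hr : HasDerivAt (rFun q b B) ((B + 1) * (E1 * L) + (B - 1) * b * (E2 * L)) 0 := by
    rw [hre]
    exact (h1.const_mul (B + 1)).add (h2.const_mul ((B - 1) * b))
  -- values of the sums at s = b²
  have hS1 : ∑' n : ℕ, a1 n * (b ^ 2) ^ n = Real.cosh b := by
    rw [Real.cosh_eq_tsum]
    congr 1; funext n
    rw [a1, ← pow_mul]
    ring
  have hS2 : b * ∑' n : ℕ, a2 n * (b ^ 2) ^ n = Real.sinh b := by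
    rw [Real.sinh_eq_tsum, ← tsum_mul_left]
    congr 1; funext n
    rw [a2, ← pow_mul, pow_succ]
    ring
  -- value of rFun at 0
  have hr0 : rFun q b B 0 = (B + 1) * Real.cosh b + (B - 1) * Real.sinh b := by
    rw [hre]
    simp only [s0]
    rw [hS1, mul_assoc, hS2]
  have hr0' : rFun q b B 0 = B * Real.exp b + Real.exp (-b) := by
    rw [hr0, Real.cosh_eq, Real.sinh_eq]; ring
  have hr0pos : 0 < rFun q b B 0 := by
    rw [hr0']
    positivity
  have hderiv : deriv (rFun q b B) 0 = (B + 1) * (E1 * L) + (B - 1) * b * (E2 * L) := hr.deriv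
  refine ⟨hr.differentiableAt, hr0', hr0pos, ?_, ?_⟩
  · -- case b ≠ 0
    intro hb
    have hden : (B + 1) * Real.cosh b + (B - 1) * Real.sinh b ≠ 0 := by
      rw [← hr0]; exact hr0pos.ne'
    have hS2' : ∑' n : ℕ, a2 n * (b ^ 2) ^ n = Real.sinh b / b := by
      field_simp [hb] at hS2 ⊢
      linarith [hS2]
    have hE1v : E1 = (1 / 2) * (Real.sinh b / b) := by
      rw [hE1, s0, E1_eq, hS2']
    have hE2v : 2 * b ^ 2 * E2 = Real.cosh b - Real.sinh b / b := by
      rw [hE2, s0, E2_eq, hS1, hS2']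
    have hb2 : b ^ 2 ≠ 0 := pow_ne_zero 2 hb
    have hE2v' : E2 = (Real.cosh b - Real.sinh b / b) / (2 * b ^ 2) := by
      rw [← hE2v]; field_simp
    rw [hderiv, hr0, hE1v, hE2v']
    field_simp
    ring
  · -- case b = 0
    intro hb
    subst hb
    have hS2v : ∑' n : ℕ, a2 n * ((0:ℝ) ^ 2) ^ n = 1 := by
      rw [tsum_eq_single 0 (fun n hn => by simp [zero_pow hn])]
      simp [a2]
    have hE1v : E1 = 1 / 2 := by
      rw [hE1, s0, E1_eq, hS2v]; norm_num
    have hB1 : B + 1 ≠ 0 := by positivity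
    rw [hderiv, hr0, hE1v]
    simp only [Real.cosh_zero, Real.sinh_zero]
    field_simp
    have hB1' : (1 + B)⁻¹ * (1 + B) = 1 := inv_mul_cancel₀ (by positivity)
    linear_combination L * hB1'
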